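/- Let d : ℕ → ℕ be a sequence with d(n) ≥ 1 and d(n)/√n → 0 as n → ∞, and let G_{n,d} denote the set of all simple d-regular graphs on the labelled vertex set {1,…,n} (considering only n with d(n)·n even). Then liminf_{n→∞} (2·ln|G_{n,d(n)}|) / (d(n)·n·ln(n/d(n))) ≥ 1; that is, |G_{n,d}| ≥ exp(d n ln(n/d)/2·(1−o(1))). -/

import Mathlib

open Filter Finset

/-- `G` is `d`-regular: every vertex has degree `d`. -/
def IsRegOfDeg {n : ℕ} (G : SimpleGraph (Fin n)) (d : ℕ) : Prop :=
  letI := Classical.decRel G.Adj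
  G.IsRegularOfDegree d





section M1
variable {m d : ℕ} (F : ℕ → Finset (Fin m))

lemma card_filter_val_lt (k : ℕ) (hk : k ≤ m) :
    (univ.filter fun j : Fin m => j.val < k).card = k := by
  classical
  rw [show (univ.filter fun j : Fin m => j.val < k)
      = (univ : Finset (Fin k)).image (Fin.castLE hk) by
    ext j
    constructor
    · intro hj
      have h : j.val < k := by simpa using hj
      exact mem_image.mpr ⟨⟨j.val, h⟩, mem_univ _, by ext; simp⟩
    · intro hj
      obtain ⟨i, -, rfl⟩ := mem_image.mp hj
      simpa using i.isLt]
  rw [Finset.card_image_of_injective _ (Fin.castLE_injective hk), card_univ, Fintype.card_fin]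

lemma exists_good_perm (hmd : 2*d ≤ m)
    (hrow : ∀ j : ℕ, (F j).card ≤ d)
    (hcol : ∀ y : Fin m, (univ.filter fun j : Fin m => y ∈ F j.val).card ≤ d)
    {k : ℕ} (hk : k = m - 2*d) (g : Fin k → Fin m) (hginj : Function.Injective g)
    (hgval : ∀ j : Fin k, g j ∉ F j.val) :
    ∃ σ : Equiv.Perm (Fin m), (∀ j : Fin m, (σ j) ∉ F j.val) ∧
      ∀ j : Fin k, σ (Fin.castLE (by omega) j) = g j := by
  classical
  have hkm : k ≤ m := by omega
  set R : Finset (Fin m) := univ \ univ.image g with hR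
  have hRcard : R.card = 2*d := by
    rw [hR, card_sdiff_of_subset (subset_univ _), card_univ, Fintype.card_fin,
      Finset.card_image_of_injective _ hginj, card_univ, Fintype.card_fin]
    omega
  have hRF : ∀ j : Fin m, d ≤ (R \ F j.val).card := by
    intro j
    have := Finset.card_le_card_sdiff_add_card (s := R) (t := F j.val)
    have := hrow j.val
    omega
  set t : Fin m → Finset (Fin m) :=
    fun j => if h : j.val < k then {g ⟨j.val, h⟩} else R \ F j.val with ht
  have hall : ∀ s : Finset (Fin m), s.card ≤ (s.biUnion t).card := by
    intro s
    set s₁ := s.filter (fun j => j.val < k) with hs₁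
    set s₂ := s.filter (fun j => ¬ j.val < k) with hs₂
    have hcards : s.card = s₁.card + s₂.card := (card_filter_add_card_filter_not _).symm
    have hsplit : s.biUnion t = s₁.biUnion t ∪ s₂.biUnion t := by
      ext y
      simp only [mem_biUnion, mem_union, hs₁, hs₂, mem_filter]
      constructor
      · rintro ⟨j, hj, hy⟩
        by_cases h : j.val < k
        · exact Or.inl ⟨j, ⟨hj, h⟩, hy⟩
        · exact Or.inr ⟨j, ⟨hj, h⟩, hy⟩
      · rintro (⟨j, hj, hy⟩ | ⟨j, hj, hy⟩) <;> exact ⟨j, hj.1, hy⟩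
    have hb1 : s₁.biUnion t ⊆ univ.image g := by
      intro y hy
      obtain ⟨j, hj, hyj⟩ := mem_biUnion.mp hy
      have hjk : j.val < k := (mem_filter.mp hj).2
      rw [ht] at hyj; simp only [dif_pos hjk, mem_singleton] at hyj
      subst hyj; exact mem_image_of_mem _ (mem_univ _)
    have hb2 : s₂.biUnion t ⊆ R := by
      intro y hy
      obtain ⟨j, hj, hyj⟩ := mem_biUnion.mp hy
      have hjk : ¬ j.val < k := (mem_filter.mp hj).2
      rw [ht] at hyj; simp only [dif_neg hjk] at hyj
      exact (mem_sdiff.mp hyj).1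
    have hdisj : Disjoint (s₁.biUnion t) (s₂.biUnion t) := by
      apply Finset.disjoint_left.mpr
      intro y hy1 hy2
      have := hb2 hy2
      rw [hR, Finset.mem_sdiff] at this
      exact this.2 (hb1 hy1)
    have hc1 : s₁.card ≤ (s₁.biUnion t).card := by
      have himg : s₁.biUnion t = s₁.image (fun j => if h : j.val < k then g ⟨j.val, h⟩ else j) := by
        ext y
        simp only [mem_biUnion, mem_image]
        constructor
        · rintro ⟨j, hj, hyj⟩
          have hjk : j.val < k := (mem_filter.mp hj).2
          rw [ht] at hyj; simp only [dif_pos hjk, mem_singleton] at hyj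
          exact ⟨j, hj, by rw [dif_pos hjk, hyj]⟩
        · rintro ⟨j, hj, rfl⟩
          have hjk : j.val < k := (mem_filter.mp hj).2
          exact ⟨j, hj, by rw [ht]; simp only [dif_pos hjk, mem_singleton, dif_pos hjk]⟩
      rw [himg]
      apply Finset.card_le_card_of_injOn _ (fun a ha => mem_image_of_mem _ ha)
      intro a ha b hb hab
      have hak : a.val < k := (mem_filter.mp ha).2
      have hbk : b.val < k := (mem_filter.mp hb).2
      dsimp only at hab
      rw [dif_pos hak, dif_pos hbk] at hab
      have h2 := congrArg Fin.val (hginj hab)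
      exact Fin.ext h2
    have hc2 : s₂.card ≤ (s₂.biUnion t).card := by
      rcases Finset.eq_empty_or_nonempty s₂ with h | ⟨j₀, hj₀⟩
      · simp [h]
      by_cases hcase : s₂.card ≤ d
      · calc s₂.card ≤ d := hcase
          _ ≤ (R \ F j₀.val).card := hRF j₀
          _ ≤ (s₂.biUnion t).card := by
              apply card_le_card
              intro y hy
              apply mem_biUnion.mpr
              refine ⟨j₀, hj₀, ?_⟩
              rw [ht]; simp only [dif_neg (mem_filter.mp hj₀).2]
              exact hy
      · have hs2sub : s₂ ⊆ univ.filter (fun j : Fin m => ¬ j.val < k) :=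
          fun j hj => mem_filter.mpr ⟨mem_univ _, (mem_filter.mp hj).2⟩
        have hs2card : s₂.card ≤ 2*d := by
          have h1 := card_le_card hs2sub
          have h2 : (univ.filter fun j : Fin m => ¬ j.val < k).card = m - k := by
            have := card_filter_add_card_filter_not (s := (univ : Finset (Fin m)))
              (p := fun j : Fin m => j.val < k)
            rw [card_filter_val_lt k hkm] at this
            simp only [card_univ, Fintype.card_fin] at this
            omega
          omega
        have hRsub : R ⊆ s₂.biUnion t := by
          intro y hyR
          have hfilter : (s₂.filter fun j => y ∈ F j.val).card < s₂.card := by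
            have hsub2 : (s₂.filter fun j => y ∈ F j.val) ⊆
                (univ.filter fun j : Fin m => y ∈ F j.val) :=
              fun j hj => mem_filter.mpr ⟨mem_univ _, (mem_filter.mp hj).2⟩
            have := card_le_card hsub2
            have := hcol y
            omega
          obtain ⟨j, hj, hjF⟩ : ∃ j ∈ s₂, y ∉ F j.val := by
            by_contra hcon
            push_neg at hcon
            have : s₂ ⊆ s₂.filter fun j => y ∈ F j.val :=
              fun j hj => mem_filter.mpr ⟨hj, hcon j hj⟩
            have := card_le_card this
            omega
          apply mem_biUnion.mpr
          refine ⟨j, hj, ?_⟩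
          rw [ht]; simp only [dif_neg (mem_filter.mp hj).2]
          exact mem_sdiff.mpr ⟨hyR, hjF⟩
        calc s₂.card ≤ 2*d := hs2card
          _ = R.card := hRcard.symm
          _ ≤ (s₂.biUnion t).card := card_le_card hRsub
    calc s.card = s₁.card + s₂.card := hcards
      _ ≤ (s₁.biUnion t).card + (s₂.biUnion t).card := Nat.add_le_add hc1 hc2
      _ = (s₁.biUnion t ∪ s₂.biUnion t).card := (card_union_of_disjoint hdisj).symm
      _ = (s.biUnion t).card := by rw [hsplit]
  obtain ⟨f, hfinj, hft⟩ := (Finset.all_card_le_biUnion_card_iff_exists_injective t).mp hall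
  have hfbij : Function.Bijective f := Finite.injective_iff_bijective.mp hfinj
  refine ⟨Equiv.ofBijective f hfbij, ?_, ?_⟩
  · intro j
    have := hft j
    rw [ht] at this
    by_cases h : j.val < k
    · simp only [dif_pos h, mem_singleton] at this
      show f j ∉ F j.val
      rw [this]
      exact hgval ⟨j.val, h⟩
    · simp only [dif_neg h] at this
      show f j ∉ F j.val
      exact (mem_sdiff.mp this).2
  · intro j
    have := hft (Fin.castLE (by omega) j)
    rw [ht] at this
    have hjk : (Fin.castLE (show k ≤ m by omega) j).val < k := j.isLt
    simp only [dif_pos hjk, mem_singleton] at this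
    show f _ = g j
    rw [this]
    exact congrArg g (Fin.ext rfl)

def validInj (m d k : ℕ) (F : ℕ → Finset (Fin m)) : Finset (Fin k → Fin m) :=
  univ.filter fun g => Function.Injective g ∧ ∀ j : Fin k, g j ∉ F j.val

lemma le_card_validInj (hrow : ∀ j : ℕ, (F j).card ≤ d) :
    ∀ k : ℕ, (∏ t ∈ range k, (m - d - t)) ≤ (validInj m d k F).card := by
  intro k
  induction k with
  | zero =>
    simp only [range_zero, prod_empty]
    rw [Nat.one_le_iff_ne_zero, ← Nat.pos_iff_ne_zero, card_pos]
    refine ⟨fun j => j.elim0, mem_filter.mpr ⟨mem_univ _, ⟨fun a => a.elim0, fun j => j.elim0⟩⟩⟩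
  | succ k ih =>
    classical
    set E : (Fin k → Fin m) → Finset (Fin m) := fun g => univ \ ((univ.image g) ∪ F k) with hE
    set S : (Fin k → Fin m) → Finset (Fin (k+1) → Fin m) :=
      fun g => (E g).image (fun y => (Fin.snoc g y : Fin (k+1) → Fin m)) with hS
    have hEcard : ∀ g : Fin k → Fin m, m - d - k ≤ (E g).card := by
      intro g
      rw [hE]
      have h1 : ((univ.image g) ∪ F k).card ≤ k + d := by
        calc ((univ.image g) ∪ F k).card ≤ (univ.image g).card + (F k).card := card_union_le _ _
          _ ≤ k + d := by
            have hi := Finset.card_image_le (s := (univ : Finset (Fin k))) (f := g)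
            have hr := hrow k
            simp only [card_univ, Fintype.card_fin] at hi
            omega
      have h2 := card_sdiff_of_subset (subset_univ ((univ.image g) ∪ F k))
      rw [h2, card_univ, Fintype.card_fin]
      omega
    have hsub : (validInj m d k F).biUnion S
        ⊆ validInj m d (k+1) F := by
      intro x hx
      obtain ⟨g, hg, hxg⟩ := mem_biUnion.mp hx
      obtain ⟨y, hy, rfl⟩ := mem_image.mp hxg
      obtain ⟨hginj, hgval⟩ := (mem_filter.mp hg).2
      rw [hE] at hy
      simp only [Finset.mem_sdiff, mem_union, mem_image, mem_univ, true_and, not_or, not_exists] at hy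
      refine mem_filter.mpr ⟨mem_univ _, ?_, ?_⟩
      · intro a b hab
        rcases Fin.eq_castSucc_or_eq_last a with ⟨a', rfl⟩ | rfl <;>
          rcases Fin.eq_castSucc_or_eq_last b with ⟨b', rfl⟩ | rfl
        · rw [Fin.snoc_castSucc, Fin.snoc_castSucc] at hab
          exact congrArg Fin.castSucc (hginj hab)
        · rw [Fin.snoc_castSucc, Fin.snoc_last] at hab
          exact absurd hab (hy.1 a')
        · rw [Fin.snoc_last, Fin.snoc_castSucc] at hab
          exact absurd hab.symm (hy.1 b')
        · rfl
      · intro j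
        rcases Fin.eq_castSucc_or_eq_last j with ⟨j', rfl⟩ | rfl
        · rw [Fin.snoc_castSucc]
          have : (Fin.castSucc j').val = j'.val := rfl
          rw [this]
          exact hgval j'
        · rw [Fin.snoc_last]
          have : (Fin.last k).val = k := rfl
          rw [this]
          exact hy.2
    have hdisj : ∀ g₁ ∈ validInj m d k F, ∀ g₂ ∈ validInj m d k F, g₁ ≠ g₂ →
        Disjoint (S g₁) (S g₂) := by
      intro g₁ _ g₂ _ hne
      apply Finset.disjoint_left.mpr
      intro x hx1 hx2
      obtain ⟨y₁, _, h1⟩ := mem_image.mp hx1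
      obtain ⟨y₂, _, h2⟩ := mem_image.mp hx2
      apply hne
      have h3 : Fin.init x = g₁ := by rw [← h1]; simp
      have h4 : Fin.init x = g₂ := by rw [← h2]; simp
      rw [← h3, ← h4]
    calc (∏ t ∈ range (k+1), (m - d - t)) = (∏ t ∈ range k, (m - d - t)) * (m - d - k) :=
          prod_range_succ _ _
      _ ≤ (validInj m d k F).card * (m - d - k) := Nat.mul_le_mul_right _ ih
      _ = ∑ _g ∈ validInj m d k F, (m - d - k) := by rw [sum_const, smul_eq_mul, mul_comm]
      _ ≤ ∑ g ∈ validInj m d k F, (S g).card := by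
          apply sum_le_sum
          intro g _
          rw [Finset.card_image_of_injective _ (fun y₁ y₂ h => by
            have := congrArg (fun f => f (Fin.last k)) h
            simpa [Fin.snoc_last] using this)]
          have := hEcard g
          omega
      _ = ((validInj m d k F).biUnion S).card :=
          (card_biUnion hdisj).symm
      _ ≤ (validInj m d (k+1) F).card := card_le_card hsub

lemma le_card_good_perms (hmd : 2*d ≤ m)
    (hrow : ∀ j : ℕ, (F j).card ≤ d)
    (hcol : ∀ y : Fin m, (univ.filter fun j : Fin m => y ∈ F j.val).card ≤ d) :
    (∏ t ∈ range (m - 2*d), (m - d - t)) ≤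
      (univ.filter fun σ : Equiv.Perm (Fin m) => ∀ j : Fin m, σ j ∉ F j.val).card := by
  classical
  set k := m - 2*d with hk
  refine le_trans (le_card_validInj F hrow k) ?_
  have spec : ∀ g ∈ validInj m d k F, ∃ σ : Equiv.Perm (Fin m),
      (∀ j : Fin m, (σ j) ∉ F j.val) ∧
      ∀ j : Fin k, σ (Fin.castLE (by omega) j) = g j := by
    intro g hg
    obtain ⟨-, hginj, hgval⟩ := mem_filter.mp hg
    exact exists_good_perm F hmd hrow hcol hk g hginj hgval
  set Φ : (Fin k → Fin m) → Equiv.Perm (Fin m) := fun g =>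
    if h : g ∈ validInj m d k F then Classical.choose (spec g h) else 1 with hΦ
  apply Finset.card_le_card_of_injOn Φ
  · intro g hg
    rw [hΦ]
    simp only [dif_pos hg]
    exact mem_filter.mpr ⟨mem_univ _, by rw [dif_pos (show g ∈ validInj m d k F from hg)]; exact (Classical.choose_spec (spec g hg)).1⟩
  · intro g₁ h₁ g₂ h₂ heq
    have h₁' : g₁ ∈ validInj m d k F := h₁
    have h₂' : g₂ ∈ validInj m d k F := h₂
    rw [hΦ] at heq
    simp only [dif_pos h₁', dif_pos h₂'] at heq
    funext j
    have e1 := (Classical.choose_spec (spec g₁ h₁')).2 j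
    have e2 := (Classical.choose_spec (spec g₂ h₂')).2 j
    rw [← e1, ← e2, heq]

end M1

section M2
variable {m d : ℕ}

def lft (j : Fin m) : Fin (2*m) := ⟨j.val, by have := j.isLt; omega⟩
def rgt (y : Fin m) : Fin (2*m) := ⟨m + y.val, by have := y.isLt; omega⟩

lemma lft_injective : Function.Injective (lft (m := m)) := by
  intro a b h
  have := congrArg Fin.val h
  exact Fin.ext this

lemma rgt_injective : Function.Injective (rgt (m := m)) := by
  intro a b h
  have := congrArg Fin.val h
  simp only [rgt] at this
  exact Fin.ext (by omega)

lemma lft_ne_rgt (j y : Fin m) : lft j ≠ rgt y := by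
  intro h
  have := congrArg Fin.val h
  simp only [lft, rgt] at this
  have := j.isLt
  omega

def tupleGraph (d : ℕ) (τ : Fin d → Equiv.Perm (Fin m)) : SimpleGraph (Fin (2*m)) where
  Adj a b := ∃ i j, (a = lft j ∧ b = rgt (τ i j)) ∨ (b = lft j ∧ a = rgt (τ i j))
  symm := by
    refine ⟨?_⟩
    rintro a b ⟨i, j, (⟨h1, h2⟩ | ⟨h1, h2⟩)⟩
    · exact ⟨i, j, Or.inr ⟨h1, h2⟩⟩
    · exact ⟨i, j, Or.inl ⟨h1, h2⟩⟩
  loopless := by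
    refine ⟨?_⟩
    rintro a ⟨i, j, (⟨h1, h2⟩ | ⟨h1, h2⟩)⟩ <;> exact lft_ne_rgt j (τ i j) (h1 ▸ h2 ▸ rfl)

def disTup (m k : ℕ) : Finset (Fin k → Equiv.Perm (Fin m)) :=
  univ.filter fun τ => ∀ i i' : Fin k, i ≠ i' → ∀ j, τ i j ≠ τ i' j

lemma le_card_disTup (hd : 1 ≤ d) (hmd : 2*d ≤ m) :
    ∀ k, k ≤ d → ((∏ t ∈ range (m - 2*d), (m - d - t)))^k ≤ (disTup m k).card := by
  have hm : 0 < m := by omega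
  intro k
  induction k with
  | zero =>
    intro _
    simp only [pow_zero, Nat.one_le_iff_ne_zero, ← Nat.pos_iff_ne_zero, card_pos]
    exact ⟨fun i => 1, mem_filter.mpr ⟨mem_univ _, fun i i' h j => absurd (Subsingleton.elim i i') h⟩⟩
  | succ k ih =>
    intro hkd
    have hk : k ≤ d := by omega
    classical
    -- forbidden sets from a tuple τ
    set Fb : (Fin k → Equiv.Perm (Fin m)) → ℕ → Finset (Fin m) :=
      fun τ jn => univ.image (fun i : Fin k => τ i ⟨jn % m, Nat.mod_lt _ hm⟩) with hFb
    have hFbj : ∀ (τ : Fin k → Equiv.Perm (Fin m)) (j : Fin m),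
        Fb τ j.val = univ.image (fun i : Fin k => τ i j) := by
      intro τ j
      have hjj : (⟨j.val % m, Nat.mod_lt _ hm⟩ : Fin m) = j := Fin.ext (Nat.mod_eq_of_lt j.isLt)
      rw [hFb]
      dsimp only
      rw [hjj]
    have hrow : ∀ τ, ∀ jn : ℕ, (Fb τ jn).card ≤ d := by
      intro τ jn
      calc (Fb τ jn).card ≤ (univ : Finset (Fin k)).card := card_image_le
        _ = k := by rw [card_univ, Fintype.card_fin]
        _ ≤ d := hk
    have hcol : ∀ τ, ∀ y : Fin m, (univ.filter fun j : Fin m => y ∈ Fb τ j.val).card ≤ d := by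
      intro τ y
      have hsub : (univ.filter fun j : Fin m => y ∈ Fb τ j.val)
          ⊆ univ.image (fun i : Fin k => (τ i).symm y) := by
        intro j hj
        have := (mem_filter.mp hj).2
        rw [hFbj] at this
        obtain ⟨i, -, hi⟩ := mem_image.mp this
        exact mem_image.mpr ⟨i, mem_univ _, by rw [← hi, Equiv.symm_apply_apply]⟩
      calc _ ≤ (univ.image (fun i : Fin k => (τ i).symm y)).card := card_le_card hsub
        _ ≤ (univ : Finset (Fin k)).card := card_image_le
        _ = k := by rw [card_univ, Fintype.card_fin]
        _ ≤ d := hk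
    set P := ∏ t ∈ range (m - 2*d), (m - d - t) with hP
    set Good : (Fin k → Equiv.Perm (Fin m)) → Finset (Equiv.Perm (Fin m)) :=
      fun τ => univ.filter (fun σ : Equiv.Perm (Fin m) => ∀ j : Fin m, σ j ∉ Fb τ j.val) with hGood
    have hGoodCard : ∀ τ, P ≤ (Good τ).card := by
      intro τ
      exact le_card_good_perms (Fb τ) hmd (hrow τ) (hcol τ)
    set S : (Fin k → Equiv.Perm (Fin m)) → Finset (Fin (k+1) → Equiv.Perm (Fin m)) :=
      fun τ => (Good τ).image (fun σ => (Fin.snoc τ σ : Fin (k+1) → Equiv.Perm (Fin m))) with hS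
    have hsub : (disTup m k).biUnion S ⊆ disTup m (k+1) := by
      intro x hx
      obtain ⟨τ, hτ, hxτ⟩ := mem_biUnion.mp hx
      obtain ⟨σ, hσ, rfl⟩ := mem_image.mp hxτ
      have hτ' := (mem_filter.mp hτ).2
      have hσ' := (mem_filter.mp hσ).2
      refine mem_filter.mpr ⟨mem_univ _, ?_⟩
      intro i i' hne j
      rcases Fin.eq_castSucc_or_eq_last i with ⟨a, rfl⟩ | rfl <;>
        rcases Fin.eq_castSucc_or_eq_last i' with ⟨b, rfl⟩ | rfl
      · rw [Fin.snoc_castSucc, Fin.snoc_castSucc]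
        exact hτ' a b (fun h => hne (congrArg Fin.castSucc h)) j
      · rw [Fin.snoc_castSucc, Fin.snoc_last]
        intro h
        have := hσ' j
        rw [hFbj] at this
        exact this (mem_image.mpr ⟨a, mem_univ _, h⟩)
      · rw [Fin.snoc_castSucc, Fin.snoc_last]
        intro h
        have := hσ' j
        rw [hFbj] at this
        exact this (mem_image.mpr ⟨b, mem_univ _, h.symm⟩)
      · exact absurd rfl hne
    have hdisj : ∀ τ₁ ∈ disTup m k, ∀ τ₂ ∈ disTup m k, τ₁ ≠ τ₂ → Disjoint (S τ₁) (S τ₂) := by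
      intro τ₁ _ τ₂ _ hne
      apply Finset.disjoint_left.mpr
      intro x hx1 hx2
      obtain ⟨y₁, _, h1⟩ := mem_image.mp hx1
      obtain ⟨y₂, _, h2⟩ := mem_image.mp hx2
      apply hne
      have h3 : Fin.init x = τ₁ := by rw [← h1]; simp
      have h4 : Fin.init x = τ₂ := by rw [← h2]; simp
      rw [← h3, ← h4]
    calc P^(k+1) = P^k * P := pow_succ _ _
      _ ≤ (disTup m k).card * P := Nat.mul_le_mul_right _ (ih hk)
      _ = ∑ _τ ∈ disTup m k, P := by rw [sum_const, smul_eq_mul, mul_comm]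
      _ ≤ ∑ τ ∈ disTup m k, (S τ).card := by
          apply sum_le_sum
          intro τ _
          rw [Finset.card_image_of_injective _ (fun y₁ y₂ h => by
            have := congrArg (fun f => f (Fin.last k)) h
            simpa using this)]
          exact hGoodCard τ
      _ = ((disTup m k).biUnion S).card := (card_biUnion hdisj).symm
      _ ≤ (disTup m (k+1)).card := card_le_card hsub

end M2


section M2b
variable {m d : ℕ}

lemma tupleGraph_regular (τ : Fin d → Equiv.Perm (Fin m)) (hτ : τ ∈ disTup m d) :
    IsRegOfDeg (tupleGraph d τ) d := by
  have hdis := (mem_filter.mp hτ).2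
  letI := Classical.decRel (tupleGraph d τ).Adj
  show ∀ v, (tupleGraph d τ).degree v = d
  intro v
  show ((tupleGraph d τ).neighborFinset v).card = d
  by_cases hv : v.val < m
  · set j : Fin m := ⟨v.val, hv⟩ with hj
    have hveq : v = lft j := Fin.ext rfl
    have hnb : (tupleGraph d τ).neighborFinset v = univ.image (fun i : Fin d => rgt (τ i j)) := by
      ext w
      rw [SimpleGraph.mem_neighborFinset]
      constructor
      · rintro ⟨i, j', (⟨h1, h2⟩ | ⟨h1, h2⟩)⟩
        · have hjj : j = j' := lft_injective (hveq ▸ h1)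
          exact mem_image.mpr ⟨i, mem_univ _, by rw [hjj, ← h2]⟩
        · exfalso
          have := congrArg Fin.val (hveq.symm.trans h2)
          simp only [lft, rgt] at this
          omega
      · intro hw
        obtain ⟨i, -, rfl⟩ := mem_image.mp hw
        exact ⟨i, j, Or.inl ⟨hveq, rfl⟩⟩
    rw [hnb, Finset.card_image_of_injective _ ?_, card_univ, Fintype.card_fin]
    intro a b hab
    by_contra hne
    exact hdis a b hne j (rgt_injective hab)
  · set y : Fin m := ⟨v.val - m, by have := v.isLt; omega⟩ with hy
    have hveq : v = rgt y := by
      apply Fin.ext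
      simp only [rgt, hy]
      omega
    have hnb : (tupleGraph d τ).neighborFinset v
        = univ.image (fun i : Fin d => lft ((τ i).symm y)) := by
      ext w
      rw [SimpleGraph.mem_neighborFinset]
      constructor
      · rintro ⟨i, j', (⟨h1, h2⟩ | ⟨h1, h2⟩)⟩
        · exfalso
          have := congrArg Fin.val (hveq.symm.trans h1)
          simp only [lft, rgt] at this
          have := j'.isLt
          omega
        · have hyy : y = τ i j' := rgt_injective (hveq ▸ h2)
          refine mem_image.mpr ⟨i, mem_univ _, ?_⟩
          rw [hyy, Equiv.symm_apply_apply, h1]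
      · intro hw
        obtain ⟨i, -, rfl⟩ := mem_image.mp hw
        exact ⟨i, (τ i).symm y, Or.inr ⟨rfl, by rw [Equiv.apply_symm_apply, ← hveq]⟩⟩
    rw [hnb, Finset.card_image_of_injective _ ?_, card_univ, Fintype.card_fin]
    intro a b hab
    by_contra hne
    have h1 := lft_injective hab
    have h2 : τ a ((τ a).symm y) = τ b ((τ a).symm y) := by
      rw [Equiv.apply_symm_apply, h1, Equiv.apply_symm_apply]
    exact hdis a b hne _ h2

theorem even_lower (m d : ℕ) (hd : 1 ≤ d) (hmd : 2*d ≤ m) :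
    (∏ t ∈ range (m - 2*d), (m - d - t))^d ≤
      Set.ncard {G : SimpleGraph (Fin (2*m)) | IsRegOfDeg G d} * d^(d*m) := by
  classical
  have hset : {G : SimpleGraph (Fin (2*m)) | IsRegOfDeg G d} =
      ↑(univ.filter fun G : SimpleGraph (Fin (2*m)) => IsRegOfDeg G d) := by
    ext G; simp
  rw [hset, Set.ncard_coe_finset]
  refine le_trans (le_card_disTup hd hmd d le_rfl) ?_
  rw [mul_comm ((univ.filter fun G : SimpleGraph (Fin (2*m)) => IsRegOfDeg G d).card) (d^(d*m))]
  have hfiber : ∀ G ∈ (disTup m d).image (tupleGraph d),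
      ((disTup m d).filter fun τ => tupleGraph d τ = G).card ≤ d^(d*m) := by
    intro G hG
    obtain ⟨τ₀, hτ₀, rfl⟩ := mem_image.mp hG
    set G := tupleGraph d τ₀
    have hreg : IsRegOfDeg G d := tupleGraph_regular τ₀ hτ₀
    letI instdec := Classical.decRel G.Adj
    have hdeg : ∀ v, G.degree v = d := hreg
    have hnbr : ∀ j : Fin m, (univ.filter fun y : Fin m => G.Adj (lft j) (rgt y)).card ≤ d := by
      intro j
      rw [← hdeg (lft j)]
      apply Finset.card_le_card_of_injOn (fun y => rgt y)
      · intro y hy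
        rw [Finset.mem_coe, SimpleGraph.mem_neighborFinset]
        exact (mem_filter.mp hy).2
      · intro a _ b _ hab
        exact rgt_injective hab
    set T : Finset (∀ p ∈ (univ : Finset (Fin d × Fin m)), Fin m) :=
      univ.pi (fun p => univ.filter fun y : Fin m => G.Adj (lft p.2) (rgt y)) with hT
    have hcardT : T.card ≤ d^(d*m) := by
      rw [hT, Finset.card_pi]
      calc ∏ p ∈ (univ : Finset (Fin d × Fin m)),
            (univ.filter fun y : Fin m => G.Adj (lft p.2) (rgt y)).card
          ≤ ∏ _p ∈ (univ : Finset (Fin d × Fin m)), d :=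
            Finset.prod_le_prod' (fun p _ => hnbr p.2)
        _ = d^(d*m) := by
            rw [prod_const, card_univ, Fintype.card_prod, Fintype.card_fin, Fintype.card_fin]
    refine le_trans (Finset.card_le_card_of_injOn (fun τ => fun p _ => τ p.1 p.2) ?_ ?_) hcardT
    · intro τ hτ
      have hGτ : tupleGraph d τ = G := (mem_filter.mp hτ).2
      apply Finset.mem_pi.mpr
      intro p _
      refine mem_filter.mpr ⟨mem_univ _, ?_⟩
      rw [← hGτ]
      exact ⟨p.1, p.2, Or.inl ⟨rfl, rfl⟩⟩
    · intro τ₁ _ τ₂ _ h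
      funext i
      apply Equiv.ext
      intro j
      exact congrFun (congrFun h (i, j)) (mem_univ _)
  calc (disTup m d).card ≤ d^(d*m) * ((disTup m d).image (tupleGraph d)).card :=
        Finset.card_le_mul_card_image (f := tupleGraph d) _ _ hfiber
    _ ≤ d^(d*m) * (univ.filter fun G : SimpleGraph (Fin (2*m)) => IsRegOfDeg G d).card := by
        apply Nat.mul_le_mul_left
        apply card_le_card
        intro G hG
        obtain ⟨τ, hτ, rfl⟩ := mem_image.mp hG
        exact mem_filter.mpr ⟨mem_univ _, tupleGraph_regular τ hτ⟩

end M2b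

section M3
variable {N : ℕ}

def isPM (H : SimpleGraph (Fin N)) (M : Finset (Fin N × Fin N)) : Prop :=
  (∀ p ∈ M, H.Adj p.1 p.2) ∧
  (∀ p ∈ M, ∀ q ∈ M, p ≠ q → p.1 ≠ q.1 ∧ p.1 ≠ q.2 ∧ p.2 ≠ q.1 ∧ p.2 ≠ q.2)

def supp (M : Finset (Fin N × Fin N)) : Finset (Fin N) :=
  M.biUnion (fun p => {p.1, p.2})

lemma mem_supp_iff {M : Finset (Fin N × Fin N)} (u : Fin N) :
    u ∈ supp M ↔ ∃ p ∈ M, u = p.1 ∨ u = p.2 := by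
  simp only [supp, mem_biUnion, mem_insert, mem_singleton]

lemma isPM_unique {H : SimpleGraph (Fin N)} {M : Finset (Fin N × Fin N)} (hPM : isPM H M)
    {p q : Fin N × Fin N} (hp : p ∈ M) (hq : q ∈ M)
    (h : p.1 = q.1 ∨ p.1 = q.2 ∨ p.2 = q.1 ∨ p.2 = q.2) : p = q := by
  by_contra hne
  have := hPM.2 p hp q hq hne
  tauto

lemma supp_card {H : SimpleGraph (Fin N)} {M : Finset (Fin N × Fin N)} (hPM : isPM H M) :
    (supp M).card = 2 * M.card := by
  classical
  rw [supp, card_biUnion]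
  · rw [Finset.sum_congr rfl (g := fun _ => 2), sum_const, smul_eq_mul, mul_comm]
    intro p hp
    rw [card_insert_of_notMem (by simp [(hPM.1 p hp).ne]), card_singleton]
  · intro p hp q hq hne
    have h4 := hPM.2 p hp q hq hne
    simp only [Finset.disjoint_left, mem_insert, mem_singleton]
    rintro a (rfl | rfl) (h | h) <;> tauto

lemma exists_matching {H : SimpleGraph (Fin N)} {d e : ℕ} (hreg : IsRegOfDeg H d)
    (hde : d = 2*e) (he : 1 ≤ e) (hdN : d < N) :
    ∃ M : Finset (Fin N × Fin N), isPM H M ∧ M.card = e := by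
  classical
  letI := Classical.decRel H.Adj
  have hdeg : ∀ v, H.degree v = d := hreg
  set S := univ.filter (fun M : Finset (Fin N × Fin N) => isPM H M ∧ M.card ≤ e) with hS
  have hSne : S.Nonempty := ⟨∅, mem_filter.mpr ⟨mem_univ _, ⟨fun p hp => absurd hp (notMem_empty _),
    fun p hp => absurd hp (notMem_empty _)⟩, by simp⟩⟩
  obtain ⟨M, hM, hmax⟩ := S.exists_max_image Finset.card hSne
  obtain ⟨-, hMPM, hMle⟩ := mem_filter.mp hM
  refine ⟨M, hMPM, ?_⟩
  by_contra hlt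
  have hMlt : M.card < e := lt_of_le_of_ne hMle hlt
  have hsuppcard : (supp M).card ≤ d - 2 := by
    have := supp_card hMPM
    omega
  obtain ⟨u, hu⟩ : ∃ u, u ∉ supp M := by
    have hcompl : ((supp M)ᶜ : Finset (Fin N)).Nonempty := by
      rw [← Finset.card_pos, Finset.card_compl, Fintype.card_fin]
      omega
    obtain ⟨u, hu⟩ := hcompl
    exact ⟨u, Finset.mem_compl.mp hu⟩
  obtain ⟨w, hwnb, hwsupp⟩ : ∃ w ∈ H.neighborFinset u, w ∉ supp M := by
    rw [← Finset.not_subset]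
    intro hsub
    have := Finset.card_le_card hsub
    rw [SimpleGraph.card_neighborFinset_eq_degree, hdeg u] at this
    omega
  have hAdj : H.Adj u w := (SimpleGraph.mem_neighborFinset _ _ _).mp hwnb
  have hnotmem : (u, w) ∉ M := by
    intro h
    exact hu ((mem_supp_iff u).mpr ⟨(u, w), h, Or.inl rfl⟩)
  have hM' : insert (u, w) M ∈ S := by
    refine mem_filter.mpr ⟨mem_univ _, ⟨?_, ?_⟩, ?_⟩
    · intro p hp
      rcases Finset.mem_insert.mp hp with rfl | hp
      · exact hAdj
      · exact hMPM.1 p hp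
    · intro p hp q hq hne
      have hcov : ∀ r ∈ M, r.1 ∈ supp M ∧ r.2 ∈ supp M := fun r hr =>
        ⟨(mem_supp_iff _).mpr ⟨r, hr, Or.inl rfl⟩, (mem_supp_iff _).mpr ⟨r, hr, Or.inr rfl⟩⟩
      rcases Finset.mem_insert.mp hp with rfl | hp <;>
        rcases Finset.mem_insert.mp hq with h2 | hq
      · exact absurd h2.symm hne
      · have := hcov q hq
        refine ⟨?_, ?_, ?_, ?_⟩ <;> rintro rfl <;> tauto
      · subst h2
        have := hcov p hp
        refine ⟨?_, ?_, ?_, ?_⟩ <;> rintro rfl <;> tauto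
      · exact hMPM.2 p hp q hq hne
    · rw [Finset.card_insert_of_notMem hnotmem]
      omega
  have := hmax _ hM'
  rw [Finset.card_insert_of_notMem hnotmem] at this
  omega

end M3

section M4
variable {N : ℕ}

def surgery (H : SimpleGraph (Fin N)) (M : Finset (Fin N × Fin N)) : SimpleGraph (Fin (N+1)) where
  Adj a b :=
    (∃ a' b', a = Fin.castSucc a' ∧ b = Fin.castSucc b' ∧ H.Adj a' b'
      ∧ (a',b') ∉ M ∧ (b',a') ∉ M)
    ∨ (a = Fin.last N ∧ ∃ b' ∈ supp M, b = Fin.castSucc b')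
    ∨ (b = Fin.last N ∧ ∃ a' ∈ supp M, a = Fin.castSucc a')
  symm := by
    refine ⟨?_⟩
    rintro a b (⟨a',b',h1,h2,h3,h4,h5⟩ | ⟨h1,b',hb,h2⟩ | ⟨h1,a',ha,h2⟩)
    · exact Or.inl ⟨b',a',h2,h1,h3.symm,h5,h4⟩
    · exact Or.inr (Or.inr ⟨h1, b', hb, h2⟩)
    · exact Or.inr (Or.inl ⟨h1, a', ha, h2⟩)
  loopless := by
    refine ⟨?_⟩
    rintro a (⟨a',b',h1,h2,h3,-,-⟩ | ⟨h1,b',hb,h2⟩ | ⟨h1,a',ha,h2⟩)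
    · have : a' = b' := Fin.castSucc_injective _ (h1.symm.trans h2)
      exact H.loopless.irrefl a' (this ▸ h3)
    · exact absurd (h2.symm.trans h1) (Fin.castSucc_lt_last b').ne
    · exact absurd (h2.symm.trans h1) (Fin.castSucc_lt_last a').ne

lemma surgery_adj_cs {H : SimpleGraph (Fin N)} {M : Finset (Fin N × Fin N)} (a b : Fin N) :
    (surgery H M).Adj a.castSucc b.castSucc ↔ (H.Adj a b ∧ (a,b) ∉ M ∧ (b,a) ∉ M) := by
  constructor
  · rintro (⟨a',b',h1,h2,h3,h4,h5⟩ | ⟨h1,-⟩ | ⟨h1,-⟩)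
    · have ha : a = a' := Fin.castSucc_injective _ h1
      have hb : b = b' := Fin.castSucc_injective _ h2
      subst ha; subst hb
      exact ⟨h3, h4, h5⟩
    · exact absurd h1 (Fin.castSucc_lt_last a).ne
    · exact absurd h1 (Fin.castSucc_lt_last b).ne
  · rintro ⟨h1,h2,h3⟩
    exact Or.inl ⟨a, b, rfl, rfl, h1, h2, h3⟩

lemma surgery_adj_last {H : SimpleGraph (Fin N)} {M : Finset (Fin N × Fin N)} (b : Fin (N+1)) :
    (surgery H M).Adj (Fin.last N) b ↔ ∃ b' ∈ supp M, b = Fin.castSucc b' := by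
  constructor
  · rintro (⟨a',b',h1,-⟩ | ⟨-,hb⟩ | ⟨-,a',ha,h2⟩)
    · exact absurd h1.symm (Fin.castSucc_lt_last a').ne
    · exact hb
    · exact absurd h2.symm (Fin.castSucc_lt_last a').ne
  · intro h
    exact Or.inr (Or.inl ⟨rfl, h⟩)

lemma surgery_recover {H : SimpleGraph (Fin N)} {M : Finset (Fin N × Fin N)}
    (hPM : isPM H M) (a b : Fin N) :
    H.Adj a b ↔ ((surgery H M).Adj a.castSucc b.castSucc ∨ (a,b) ∈ M ∨ (b,a) ∈ M) := by
  rw [surgery_adj_cs]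
  constructor
  · intro h
    by_cases h1 : (a,b) ∈ M
    · exact Or.inr (Or.inl h1)
    by_cases h2 : (b,a) ∈ M
    · exact Or.inr (Or.inr h2)
    exact Or.inl ⟨h, h1, h2⟩
  · rintro (⟨h,-⟩ | h | h)
    · exact h
    · exact hPM.1 _ h
    · exact (hPM.1 _ h).symm

lemma surgery_regular {H : SimpleGraph (Fin N)} {M : Finset (Fin N × Fin N)} {d e : ℕ}
    (hreg : IsRegOfDeg H d) (hPM : isPM H M) (hcard : M.card = e) (hde : d = 2*e)
    (he : 1 ≤ e) : IsRegOfDeg (surgery H M) d := by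
  classical
  letI := Classical.decRel H.Adj
  letI := Classical.decRel (surgery H M).Adj
  have hdeg : ∀ v, H.degree v = d := hreg
  show ∀ v, (surgery H M).degree v = d
  intro v
  show ((surgery H M).neighborFinset v).card = d
  rcases Fin.eq_castSucc_or_eq_last v with ⟨u, rfl⟩ | rfl
  · by_cases hu : u ∈ supp M
    · obtain ⟨p, hp, hup⟩ := (mem_supp_iff u).mp hu
      have hadjp := hPM.1 p hp
      set w := if u = p.1 then p.2 else p.1 with hw
      have huw : u ≠ w ∧ H.Adj u w := by
        rcases hup with h | h
        · rw [hw, if_pos h, h]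
          exact ⟨hadjp.ne, hadjp⟩
        · have hne : ¬ (u = p.1) := by rw [h]; exact hadjp.ne'
          rw [hw, if_neg hne, h]
          exact ⟨hadjp.ne', hadjp.symm⟩
      have hpartner : ∀ b', ((u,b') ∈ M ∨ (b',u) ∈ M) ↔ b' = w := by
        intro b'
        constructor
        · rintro (hq | hq)
          · have hpq : p = (u, b') := isPM_unique hPM hp hq (by tauto)
            have hup1 : u = p.1 := by rw [hpq]
            rw [hw, if_pos hup1, hpq]
          · have hpq : p = (b', u) := isPM_unique hPM hp hq (by tauto)
            have hup2 : u = p.2 := by rw [hpq]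
            have hne : ¬ (u = p.1) := by
              rw [hpq]
              exact (hPM.1 _ hq).ne'
            rw [hw, if_neg hne, hpq]
        · rintro rfl
          rcases hup with h | h
          · left
            have : p = (u, w) := by
              rw [hw, if_pos h]
              exact Prod.ext h.symm rfl
            exact this ▸ hp
          · right
            have hne : ¬ (u = p.1) := by rw [h]; exact hadjp.ne'
            have : p = (w, u) := by
              rw [hw, if_neg hne]
              exact Prod.ext rfl h.symm
            exact this ▸ hp
      have hnb : (surgery H M).neighborFinset u.castSucc
          = ((H.neighborFinset u).erase w).image Fin.castSucc ∪ {Fin.last N} := by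
        ext x
        rw [SimpleGraph.mem_neighborFinset]
        constructor
        · intro hx
          rcases Fin.eq_castSucc_or_eq_last x with ⟨b, rfl⟩ | rfl
          · obtain ⟨hadj, hm1, hm2⟩ := (surgery_adj_cs u b).mp hx
            have hbw : b ≠ w := by
              intro hbw
              rcases (hpartner b).mpr hbw with h | h
              · exact hm1 h
              · exact hm2 h
            apply Finset.mem_union_left
            exact mem_image.mpr ⟨b, Finset.mem_erase.mpr
              ⟨hbw, (SimpleGraph.mem_neighborFinset _ _ _).mpr hadj⟩, rfl⟩
          · exact Finset.mem_union_right _ (mem_singleton.mpr rfl)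
        · intro hx
          rcases Finset.mem_union.mp hx with hx | hx
          · obtain ⟨b, hb, rfl⟩ := mem_image.mp hx
            obtain ⟨hbw, hbnb⟩ := Finset.mem_erase.mp hb
            apply (surgery_adj_cs u b).mpr
            refine ⟨(SimpleGraph.mem_neighborFinset _ _ _).mp hbnb, ?_, ?_⟩
            · intro h; exact hbw ((hpartner b).mp (Or.inl h))
            · intro h; exact hbw ((hpartner b).mp (Or.inr h))
          · rw [mem_singleton.mp hx]
            exact Or.inr (Or.inr ⟨rfl, u, hu, rfl⟩)
      rw [hnb, card_union_of_disjoint, Finset.card_image_of_injective _ (Fin.castSucc_injective N),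
        Finset.card_erase_of_mem ((SimpleGraph.mem_neighborFinset _ _ _).mpr huw.2),
        card_singleton]
      · rw [SimpleGraph.card_neighborFinset_eq_degree, hdeg u]
        omega
      · rw [Finset.disjoint_right]
        intro x hx hximg
        rw [mem_singleton.mp hx] at hximg
        obtain ⟨b, -, hb⟩ := mem_image.mp hximg
        exact absurd hb (Fin.castSucc_lt_last b).ne
    · have hnb : (surgery H M).neighborFinset u.castSucc
          = (H.neighborFinset u).image Fin.castSucc := by
        ext x
        rw [SimpleGraph.mem_neighborFinset]
        constructor
        · intro hx
          rcases Fin.eq_castSucc_or_eq_last x with ⟨b, rfl⟩ | rfl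
          · obtain ⟨hadj, -, -⟩ := (surgery_adj_cs u b).mp hx
            exact mem_image.mpr ⟨b, (SimpleGraph.mem_neighborFinset _ _ _).mpr hadj, rfl⟩
          · exfalso
            rcases hx with ⟨a',b',h1,h2,-⟩ | ⟨h1,-⟩ | ⟨-,a',ha,h2⟩
            · exact absurd h2.symm (Fin.castSucc_lt_last b').ne
            · exact absurd h1 (Fin.castSucc_lt_last u).ne
            · have : u = a' := Fin.castSucc_injective _ h2
              exact hu (this ▸ ha)
        · intro hx
          obtain ⟨b, hb, rfl⟩ := mem_image.mp hx
          apply (surgery_adj_cs u b).mpr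
          refine ⟨(SimpleGraph.mem_neighborFinset _ _ _).mp hb, ?_, ?_⟩
          · intro h
            exact hu ((mem_supp_iff u).mpr ⟨(u,b), h, Or.inl rfl⟩)
          · intro h
            exact hu ((mem_supp_iff u).mpr ⟨(b,u), h, Or.inr rfl⟩)
      rw [hnb, Finset.card_image_of_injective _ (Fin.castSucc_injective N),
        SimpleGraph.card_neighborFinset_eq_degree, hdeg u]
  · have hnb : (surgery H M).neighborFinset (Fin.last N) = (supp M).image Fin.castSucc := by
      ext x
      rw [SimpleGraph.mem_neighborFinset, surgery_adj_last]
      constructor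
      · rintro ⟨b', hb, rfl⟩
        exact mem_image.mpr ⟨b', hb, rfl⟩
      · intro hx
        obtain ⟨b', hb, rfl⟩ := mem_image.mp hx
        exact ⟨b', hb, rfl⟩
    rw [hnb, Finset.card_image_of_injective _ (Fin.castSucc_injective N), supp_card hPM, hcard]
    omega

theorem odd_lower (N d e : ℕ) (hde : d = 2*e) (he : 1 ≤ e) (hdN : d < N) :
    Set.ncard {G : SimpleGraph (Fin N) | IsRegOfDeg G d} ≤
      Set.ncard {G : SimpleGraph (Fin (N+1)) | IsRegOfDeg G d} * 2^(d*d) := by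
  classical
  have hset1 : {G : SimpleGraph (Fin N) | IsRegOfDeg G d} =
      ↑(univ.filter fun G : SimpleGraph (Fin N) => IsRegOfDeg G d) := by ext G; simp
  have hset2 : {G : SimpleGraph (Fin (N+1)) | IsRegOfDeg G d} =
      ↑(univ.filter fun G : SimpleGraph (Fin (N+1)) => IsRegOfDeg G d) := by ext G; simp
  rw [hset1, hset2, Set.ncard_coe_finset, Set.ncard_coe_finset,
    mul_comm ((univ.filter fun G : SimpleGraph (Fin (N+1)) => IsRegOfDeg G d).card) (2^(d*d))]
  set pick : SimpleGraph (Fin N) → Finset (Fin N × Fin N) := fun H =>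
    if h : IsRegOfDeg H d then Classical.choose (exists_matching h hde he hdN) else ∅ with hpick
  have hpickspec : ∀ H : SimpleGraph (Fin N), IsRegOfDeg H d →
      isPM H (pick H) ∧ (pick H).card = e := by
    intro H h
    rw [hpick]
    simp only [dif_pos h]
    exact Classical.choose_spec (exists_matching h hde he hdN)
  set f : SimpleGraph (Fin N) → SimpleGraph (Fin (N+1)) := fun H => surgery H (pick H) with hf
  set regsN := univ.filter fun G : SimpleGraph (Fin N) => IsRegOfDeg G d with hregsN
  have hfibers : ∀ G ∈ regsN.image f, (regsN.filter fun H => f H = G).card ≤ 2^(d*d) := by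
    intro G hG
    obtain ⟨H₀, hH₀, rfl⟩ := mem_image.mp hG
    have hH₀reg : IsRegOfDeg H₀ d := (mem_filter.mp hH₀).2
    have hGreg : IsRegOfDeg (f H₀) d :=
      surgery_regular hH₀reg (hpickspec H₀ hH₀reg).1 (hpickspec H₀ hH₀reg).2 hde he
    letI := Classical.decRel (f H₀).Adj
    have hGdeg : ∀ v, (f H₀).degree v = d := hGreg
    set P : Finset (Fin N) := univ.filter fun u => (f H₀).Adj u.castSucc (Fin.last N) with hP
    have hPcard : P.card ≤ d := by
      rw [← hGdeg (Fin.last N)]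
      apply Finset.card_le_card_of_injOn Fin.castSucc
      · intro u huP
        rw [Finset.mem_coe, SimpleGraph.mem_neighborFinset]
        exact ((mem_filter.mp huP).2).symm
      · intro a _ b _ hab
        exact Fin.castSucc_injective _ hab
    have hsub : ∀ H ∈ regsN.filter fun H => f H = f H₀, pick H ∈ (P ×ˢ P).powerset := by
      intro H hH
      obtain ⟨hHregs, hfH⟩ := mem_filter.mp hH
      have hHreg : IsRegOfDeg H d := (mem_filter.mp hHregs).2
      rw [Finset.mem_powerset]
      intro p hpM
      have hPM := (hpickspec H hHreg).1
      have h1 : p.1 ∈ supp (pick H) := (mem_supp_iff _).mpr ⟨p, hpM, Or.inl rfl⟩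
      have h2 : p.2 ∈ supp (pick H) := (mem_supp_iff _).mpr ⟨p, hpM, Or.inr rfl⟩
      have hadj : ∀ u ∈ supp (pick H), (f H₀).Adj u.castSucc (Fin.last N) := by
        intro u hus
        rw [← hfH]
        exact ((surgery_adj_last _).mpr ⟨u, hus, rfl⟩).symm
      rw [Finset.mem_product]
      exact ⟨mem_filter.mpr ⟨mem_univ _, hadj _ h1⟩, mem_filter.mpr ⟨mem_univ _, hadj _ h2⟩⟩
    calc (regsN.filter fun H => f H = f H₀).card ≤ ((P ×ˢ P).powerset).card := by
          apply Finset.card_le_card_of_injOn pick hsub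
          intro H₁ hH₁ H₂ hH₂ hpickeq
          have h₁ := mem_filter.mp hH₁
          have h₂ := mem_filter.mp hH₂
          have hr₁ : IsRegOfDeg H₁ d := (mem_filter.mp h₁.1).2
          have hr₂ : IsRegOfDeg H₂ d := (mem_filter.mp h₂.1).2
          have hfeq : f H₁ = f H₂ := h₁.2.trans h₂.2.symm
          apply SimpleGraph.ext
          funext a b
          apply propext
          rw [surgery_recover (hpickspec H₁ hr₁).1 a b,
            surgery_recover (hpickspec H₂ hr₂).1 a b]
          show (f H₁).Adj _ _ ∨ _ ↔ (f H₂).Adj _ _ ∨ _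
          rw [hfeq, hpickeq]
      _ ≤ 2^(d*d) := by
          rw [Finset.card_powerset, Finset.card_product]
          exact Nat.pow_le_pow_right (by omega) (Nat.mul_le_mul hPcard hPcard)
  calc regsN.card ≤ 2^(d*d) * (regsN.image f).card :=
        Finset.card_le_mul_card_image (f := f) _ _ hfibers
    _ ≤ 2^(d*d) * (univ.filter fun G : SimpleGraph (Fin (N+1)) => IsRegOfDeg G d).card := by
        apply Nat.mul_le_mul_left
        apply card_le_card
        intro G hG
        obtain ⟨H, hH, rfl⟩ := mem_image.mp hG
        have hHreg : IsRegOfDeg H d := (mem_filter.mp hH).2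
        exact mem_filter.mpr ⟨mem_univ _,
          surgery_regular hHreg (hpickspec H hHreg).1 (hpickspec H hHreg).2 hde he⟩

end M4

section M5a

lemma pow_le_factorial_mul_exp : ∀ n : ℕ, (n:ℝ)^n ≤ n.factorial * Real.exp n := by
  intro n
  induction n with
  | zero => simp
  | succ n ih =>
    have hc : ((n+1:ℕ):ℝ) = (n:ℝ)+1 := by push_cast; ring
    rw [hc]
    have hstep : ((n:ℝ)+1)^n ≤ (n:ℝ)^n * Real.exp 1 := by
      rcases Nat.eq_zero_or_pos n with rfl | hn
      · have := Real.add_one_le_exp 1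
        simp only [Nat.cast_zero, zero_add, pow_zero, one_mul]
        linarith
      · have hne : (n:ℝ) ≠ 0 := Nat.cast_ne_zero.mpr hn.ne'
        have h1 : (n:ℝ)+1 = n * (1 + 1/n) := by field_simp
        rw [h1, mul_pow]
        apply mul_le_mul_of_nonneg_left ?_ (by positivity)
        have h2 : (1 + 1/(n:ℝ))^n ≤ Real.exp (1/n) ^ n := by
          apply pow_le_pow_left₀ (by positivity)
          have := Real.add_one_le_exp (1/(n:ℝ))
          linarith
        refine h2.trans ?_
        rw [← Real.exp_nat_mul, show (n:ℝ) * (1/n) = 1 by field_simp]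
    calc ((n:ℝ)+1)^(n+1) = ((n:ℝ)+1) * ((n:ℝ)+1)^n := by ring
      _ ≤ ((n:ℝ)+1) * ((n:ℝ)^n * Real.exp 1) :=
          mul_le_mul_of_nonneg_left hstep (by positivity)
      _ ≤ ((n:ℝ)+1) * ((n.factorial * Real.exp n) * Real.exp 1) :=
          mul_le_mul_of_nonneg_left
            (mul_le_mul_of_nonneg_right ih (Real.exp_nonneg 1)) (by positivity)
      _ = (n+1).factorial * Real.exp ((n:ℝ)+1) := by
          rw [Nat.factorial_succ, Real.exp_add]
          push_cast
          ring

lemma le_log_factorial (n : ℕ) : (n:ℝ) * Real.log n - n ≤ Real.log n.factorial := by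
  rcases Nat.eq_zero_or_pos n with rfl | hn
  · simp
  have h1 : (0:ℝ) < (n:ℝ)^n := by positivity
  have h2 := Real.log_le_log h1 (pow_le_factorial_mul_exp n)
  have hfne : ((n.factorial : ℕ):ℝ) ≠ 0 := Nat.cast_ne_zero.mpr n.factorial_ne_zero
  rw [Real.log_pow, Real.log_mul hfne (Real.exp_ne_zero _), Real.log_exp] at h2
  push_cast at h2 ⊢
  linarith

lemma log_factorial_le (n : ℕ) : Real.log n.factorial ≤ (n:ℝ) * Real.log n := by
  rcases Nat.eq_zero_or_pos n with rfl | hn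
  · simp
  have h0 : ((n.factorial : ℕ):ℝ) ≤ (n:ℝ)^n := by exact_mod_cast Nat.factorial_le_pow n
  have h2 := Real.log_le_log (by positivity) h0
  rwa [Real.log_pow] at h2

lemma neg_two_mul_le_log_one_sub {x : ℝ} (h0 : 0 ≤ x) (h1 : x ≤ 1/2) :
    -(2*x) ≤ Real.log (1 - x) := by
  have hpos : (0:ℝ) < 1 - x := by linarith
  have h2 : Real.log (1-x)⁻¹ ≤ (1-x)⁻¹ - 1 := Real.log_le_sub_one_of_pos (by positivity)
  rw [Real.log_inv] at h2
  have h3 : (1-x)⁻¹ - 1 = x / (1-x) := by field_simp; ring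
  have h4 : x / (1-x) ≤ 2*x := by
    rw [div_le_iff₀ hpos]
    nlinarith
  linarith

lemma nreg_upper (n dg : ℕ) :
    Set.ncard {G : SimpleGraph (Fin n) | IsRegOfDeg G dg} ≤ n^(dg*n) := by
  classical
  have hset : {G : SimpleGraph (Fin n) | IsRegOfDeg G dg} =
      ↑(univ.filter fun G : SimpleGraph (Fin n) => IsRegOfDeg G dg) := by ext G; simp
  rw [hset, Set.ncard_coe_finset]
  set T : Finset (∀ v ∈ (univ : Finset (Fin n)), Finset (Fin n)) :=
    univ.pi (fun _ => univ.powersetCard dg) with hT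
  have hTcard : T.card = (n.choose dg)^n := by
    rw [hT, Finset.card_pi]
    rw [Finset.prod_congr rfl (g := fun _ => n.choose dg)
      (fun _ _ => by rw [Finset.card_powersetCard, card_univ, Fintype.card_fin])]
    rw [prod_const, card_univ, Fintype.card_fin]
  have hinj : (univ.filter fun G : SimpleGraph (Fin n) => IsRegOfDeg G dg).card ≤ T.card := by
    apply Finset.card_le_card_of_injOn
      (fun G => fun v _ => (letI := Classical.decRel G.Adj; G.neighborFinset v))
    · intro G hG
      have hreg : IsRegOfDeg G dg := (mem_filter.mp hG).2
      letI := Classical.decRel G.Adj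
      have hdeg : ∀ v, G.degree v = dg := hreg
      apply Finset.mem_pi.mpr
      intro v _
      exact Finset.mem_powersetCard.mpr ⟨subset_univ _, hdeg v⟩
    · intro G₁ _ G₂ _ h
      letI := Classical.decRel G₁.Adj
      letI := Classical.decRel G₂.Adj
      apply SimpleGraph.ext
      funext a b
      apply propext
      have h2 := congrFun (congrFun h a) (mem_univ a)
      dsimp only at h2
      constructor
      · intro hadj
        have hb : b ∈ G₁.neighborFinset a := (SimpleGraph.mem_neighborFinset _ _ _).mpr hadj
        rw [h2] at hb
        exact (SimpleGraph.mem_neighborFinset _ _ _).mp hb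
      · intro hadj
        have hb : b ∈ G₂.neighborFinset a := (SimpleGraph.mem_neighborFinset _ _ _).mpr hadj
        rw [← h2] at hb
        exact (SimpleGraph.mem_neighborFinset _ _ _).mp hb
  calc (univ.filter fun G : SimpleGraph (Fin n) => IsRegOfDeg G dg).card
      ≤ T.card := hinj
    _ = (n.choose dg)^n := hTcard
    _ ≤ (n^dg)^n := Nat.pow_le_pow_left (Nat.choose_le_pow n dg) n
    _ = n^(dg*n) := by rw [← pow_mul]

end M5a

section M5b

lemma core_arith {ε m dr nr q L ld lnd : ℝ} (hε : 0 < ε) (hε1 : ε ≤ 1)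
    (hd1 : 1 ≤ dr) (hdm : dr ≤ Real.sqrt m) (hq : q = m - dr)
    (hn : 2*m ≤ nr) (hn2 : nr ≤ 2*m+1)
    (hL : L = Real.log m) (hld : ld = Real.log dr) (hlnd : lnd = Real.log (nr/dr))
    (hm1 : 64 ≤ m) (hsq : 8/ε ≤ Real.sqrt m) (hLε : 28/ε ≤ L) :
    (1-ε) * (dr * nr * lnd) ≤
      2*(dr*(q*Real.log q - q - dr*ld - m*ld) - dr^2*Real.log 2) := by
  set s := Real.sqrt m with hsdef
  have hm0 : (0:ℝ) < m := by linarith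
  have hs : s*s = m := Real.mul_self_sqrt hm0.le
  have hs8 : 8 ≤ s := by
    have h1 : Real.sqrt 64 ≤ s := Real.sqrt_le_sqrt (by linarith)
    have h2 : Real.sqrt 64 = 8 := by
      rw [show (64:ℝ) = 8^2 by norm_num, Real.sqrt_sq (by norm_num : (0:ℝ) ≤ 8)]
    linarith
  have hd0 : (0:ℝ) < dr := by linarith
  have hsm8 : s ≤ m/8 := by nlinarith
  have hsm : s ≤ m := by nlinarith
  have hL28 : 28 ≤ L := by
    have : 28/1 ≤ 28/ε := by
      apply div_le_div_of_nonneg_left (by norm_num) hε hε1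
    simp at this
    linarith
  have hld0 : 0 ≤ ld := hld ▸ Real.log_nonneg hd1
  have hldL : ld ≤ L := by
    rw [hld, hL]
    exact Real.log_le_log hd0 (by linarith)
  have hn0 : 0 < nr := by linarith
  -- lower bound on log q
  have hq2 : m/2 ≤ q := by rw [hq]; linarith
  have hq0 : 0 < q := by linarith
  have hfrac : dr/m ≤ 1/2 := by
    rw [div_le_iff₀ hm0]
    linarith
  have hlogq : L - 2*(dr/m) ≤ Real.log q := by
    have hfactor : q = m * (1 - dr/m) := by
      field_simp [hq]
      exact hq
    have h1 : Real.log q = L + Real.log (1 - dr/m) := by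
      rw [hfactor, Real.log_mul hm0.ne' (by nlinarith [hfrac] : (1:ℝ) - dr/m ≠ 0), hL]
    have h2 := neg_two_mul_le_log_one_sub (x := dr/m) (by positivity) hfrac
    linarith
  have hA : m*L - dr*L - 2*dr ≤ q * Real.log q := by
    have hnonneg : 0 ≤ L - 2*(dr/m) := by
      have : 2*(dr/m) ≤ 1 := by linarith [hfrac]
      linarith
    have h1 : q * (L - 2*(dr/m)) ≤ q * Real.log q :=
      mul_le_mul_of_nonneg_left hlogq hq0.le
    have h2 : q * (L - 2*(dr/m)) = m*L - dr*L - 2*dr + 2*(dr*dr)/m := by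
      rw [hq]
      field_simp
      ring
    have h3 : 0 ≤ 2*(dr*dr)/m := by positivity
    linarith
  have hlog2 : Real.log 2 ≤ 1 := by
    have := Real.log_le_sub_one_of_pos (by norm_num : (0:ℝ) < 2)
    linarith
  have hlog2pos : 0 ≤ Real.log 2 := Real.log_nonneg (by norm_num)
  have hlnd_up : lnd ≤ L + 2 - ld := by
    have h1 : lnd = Real.log nr - ld := by
      rw [hlnd, hld, Real.log_div hn0.ne' hd0.ne']
    have h2 : Real.log nr ≤ Real.log (3*m) := Real.log_le_log hn0 (by linarith)
    have h3 : Real.log (3*m) = Real.log 3 + L := by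
      rw [Real.log_mul (by norm_num) hm0.ne', hL]
    have h4 : Real.log 3 ≤ 2 := by
      have := Real.log_le_sub_one_of_pos (by norm_num : (0:ℝ) < 3)
      linarith
    linarith
  have hlnd_low : L/2 ≤ lnd := by
    have h1 : s ≤ nr/dr := by
      rw [le_div_iff₀ hd0]
      have h0 : s*dr ≤ s*s := mul_le_mul_of_nonneg_left hdm (by linarith)
      linarith [hs.le, hs.ge]
    have h2 : Real.log s = L/2 := by
      rw [hsdef, Real.log_sqrt hm0.le, hL]
    have h3 : Real.log s ≤ Real.log (nr/dr) := Real.log_le_log (by linarith) h1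
    rw [hlnd]
    linarith
  have hlnd0 : 0 ≤ lnd := by linarith
  -- step 1 : bound LHS
  have step1 : (1-ε) * (dr * nr * lnd) ≤
      dr * ((2*m+1)*(L+2) - 2*m*ld - ε*m*L) := by
    have u1 : nr*lnd ≤ (2*m+1)*lnd := mul_le_mul_of_nonneg_right hn2 hlnd0
    have u2 : (2*m+1)*lnd ≤ (2*m+1)*(L+2-ld) :=
      mul_le_mul_of_nonneg_left hlnd_up (by linarith)
    have u3 : (2*m+1)*(L+2-ld) ≤ (2*m+1)*(L+2) - 2*m*ld := by linarith [hld0]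
    have u4 : m*L ≤ nr*lnd := by
      have : (2*m)*(L/2) ≤ nr*lnd :=
        mul_le_mul hn hlnd_low (by linarith) hn0.le
      linarith
    have u5 : ε*dr*(m*L) ≤ ε*dr*(nr*lnd) :=
      mul_le_mul_of_nonneg_left u4 (by positivity)
    have u6 : dr*(nr*lnd) ≤ dr*((2*m+1)*(L+2) - 2*m*ld) :=
      mul_le_mul_of_nonneg_left (by linarith) hd0.le
    linarith [u5, u6]
  -- step 2 : key polynomial comparison
  have hεs : 8 ≤ ε*s := by
    rw [div_le_iff₀ hε] at hsq
    linarith [hsq]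
  have hεL : 28 ≤ ε*L := by
    rw [div_le_iff₀ hε] at hLε
    linarith [hLε]
  have step2 : (2*m+1)*(L+2) - 2*m*ld - ε*m*L ≤
      2*(m*L - dr*L - 2*dr - m - dr*ld - m*ld) - 2*dr := by
    have k1 : 8*(s*L) ≤ (ε*s)*(s*L) :=
      mul_le_mul_of_nonneg_right hεs (mul_nonneg (by linarith) (by linarith))
    have k1' : (ε*s)*(s*L) = ε*m*L := by rw [← hs]; ring
    have k2 : 28*m ≤ (ε*L)*m := mul_le_mul_of_nonneg_right hεL hm0.le
    have k3 : dr*ld ≤ s*L := mul_le_mul hdm hldL hld0 (by linarith)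
    have k4 : dr*L ≤ s*L := mul_le_mul_of_nonneg_right hdm (by linarith)
    have k5 : L ≤ m := by
      have := Real.log_le_sub_one_of_pos hm0
      rw [← hL] at this
      linarith
    linarith [k1, k1', k2, k3, k4, k5, hsm, hs8, hld0, hd0.le, hdm]
  -- step 3 : from polynomial bound to actual RHS
  have c1 : m*L - dr*L - 2*dr - m - dr*ld - m*ld ≤ q*Real.log q - q - dr*ld - m*ld := by
    linarith [hA, hq.le, hq.ge]
  have c2 : dr * ((2*m+1)*(L+2) - 2*m*ld - ε*m*L) ≤
      dr * (2*(q*Real.log q - q - dr*ld - m*ld) - 2*dr*Real.log 2) := by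
    apply mul_le_mul_of_nonneg_left _ hd0.le
    have h0 : 2*dr*Real.log 2 ≤ 2*dr*1 :=
      mul_le_mul_of_nonneg_left hlog2 (by linarith)
    linarith [step2, c1]
  have c3 : dr * (2*(q*Real.log q - q - dr*ld - m*ld) - 2*dr*Real.log 2) =
      2*(dr*(q*Real.log q - q - dr*ld - m*ld) - dr^2*Real.log 2) := by ring
  linarith [step1, c2, c3.le, c3.ge]

end M5b

section M5c

noncomputable def NRg (n dg : ℕ) : ℕ := Set.ncard {G : SimpleGraph (Fin n) | IsRegOfDeg G dg}

lemma nat_log_mono {a b : ℕ} (h : a ≤ b) : Real.log a ≤ Real.log b := by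
  rcases Nat.eq_zero_or_pos a with rfl | ha
  · simp only [Nat.cast_zero, Real.log_zero]
    rcases Nat.eq_zero_or_pos b with rfl | hb
    · simp
    · exact Real.log_nonneg (by exact_mod_cast hb)
  · exact Real.log_le_log (by exact_mod_cast ha) (by exact_mod_cast h)

lemma nat_log_nonneg (a : ℕ) : 0 ≤ Real.log a := by
  simpa using nat_log_mono (Nat.zero_le a)

lemma even_log_bound (m dg : ℕ) (hd : 1 ≤ dg) (hmd : 2*dg ≤ m) :
    (dg:ℝ) * ( ((m:ℝ)-dg) * Real.log ((m:ℝ)-dg) - ((m:ℝ)-dg) - (dg:ℝ)*Real.log dg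
               - (m:ℝ)*Real.log dg )
      ≤ Real.log (NRg (2*m) dg) := by
  classical
  set P := (m - dg).descFactorial (m - 2*dg) with hPdef
  have hNat : P^dg ≤ NRg (2*m) dg * dg^(dg*m) := by
    have h : (∏ t ∈ range (m - 2*dg), (m - dg - t))^dg ≤ NRg (2*m) dg * dg^(dg*m) :=
      even_lower m dg hd hmd
    rw [hPdef, Nat.descFactorial_eq_prod_range]
    exact h
  have hfact : dg.factorial * P = (m - dg).factorial := by
    have h := Nat.factorial_mul_descFactorial (show m - 2*dg ≤ m - dg by omega)
    rwa [show m - dg - (m - 2*dg) = dg by omega] at h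
  have hPpos : 0 < P := by
    rcases Nat.eq_zero_or_pos P with h0 | h
    · rw [h0, Nat.mul_zero] at hfact
      exact absurd hfact.symm (m - dg).factorial_ne_zero
    · exact h
  have hNpos : 0 < NRg (2*m) dg := by
    rcases Nat.eq_zero_or_pos (NRg (2*m) dg) with h0 | h
    · rw [h0, Nat.zero_mul] at hNat
      have := Nat.pow_pos (n := dg) hPpos
      omega
    · exact h
  have hdpos : 0 < dg := hd
  -- logs of the main counting inequality
  have hcast : ((P:ℝ))^dg ≤ (NRg (2*m) dg : ℝ) * (dg:ℝ)^(dg*m) := by exact_mod_cast hNat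
  have hlog1 : (dg:ℝ) * Real.log P ≤
      Real.log (NRg (2*m) dg) + (dg:ℝ)*(m:ℝ)*Real.log dg := by
    have h1 := Real.log_le_log (by positivity) hcast
    rw [Real.log_pow, Real.log_mul (by exact_mod_cast hNpos.ne') (by positivity),
      Real.log_pow] at h1
    push_cast at h1
    linarith
  -- log P from factorials
  have hlogP : Real.log (dg.factorial) + Real.log P = Real.log ((m - dg).factorial) := by
    rw [← Real.log_mul (by exact_mod_cast dg.factorial_ne_zero) (by exact_mod_cast hPpos.ne')]
    norm_cast
    rw [hfact]
  have hf1 := le_log_factorial (m - dg)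
  have hf2 := log_factorial_le dg
  have hcast2 : ((m - dg : ℕ):ℝ) = (m:ℝ) - dg := by
    rw [Nat.cast_sub (by omega)]
  rw [hcast2] at hf1
  have hlogPlow : ((m:ℝ)-dg) * Real.log ((m:ℝ)-dg) - ((m:ℝ)-dg) - (dg:ℝ)*Real.log dg
      ≤ Real.log P := by linarith
  have hmul : (dg:ℝ) * (((m:ℝ)-dg) * Real.log ((m:ℝ)-dg) - ((m:ℝ)-dg) - (dg:ℝ)*Real.log dg)
      ≤ (dg:ℝ) * Real.log P :=
    mul_le_mul_of_nonneg_left hlogPlow (by positivity)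
  nlinarith [hmul, hlog1]

lemma odd_log_bound (N dg e : ℕ) (hde : dg = 2*e) (he : 1 ≤ e) (hdN : dg < N) :
    Real.log (NRg N dg) - (dg:ℝ)^2 * Real.log 2 ≤ Real.log (NRg (N+1) dg) := by
  have h : NRg N dg ≤ NRg (N+1) dg * 2^(dg*dg) := odd_lower N dg e hde he hdN
  have hlog2pos : 0 ≤ Real.log 2 := Real.log_nonneg (by norm_num)
  rcases Nat.eq_zero_or_pos (NRg N dg) with h0 | hpos
  · show Real.log ((NRg N dg : ℕ):ℝ) - _ ≤ _
    rw [h0]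
    simp only [Nat.cast_zero, Real.log_zero]
    have h1 := nat_log_nonneg (NRg (N+1) dg)
    have h2 : 0 ≤ (dg:ℝ)^2 * Real.log 2 := by positivity
    linarith
  · have hpos2 : 0 < NRg (N+1) dg := by
      rcases Nat.eq_zero_or_pos (NRg (N+1) dg) with h0 | h2
      · rw [h0, Nat.zero_mul] at h
        omega
      · exact h2
    have hcast : ((NRg N dg : ℕ):ℝ) ≤ (NRg (N+1) dg : ℝ) * (2:ℝ)^(dg*dg) := by
      exact_mod_cast h
    have h1 := Real.log_le_log (by exact_mod_cast hpos) hcast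
    rw [Real.log_mul (by exact_mod_cast hpos2.ne') (by positivity), Real.log_pow] at h1
    have : ((dg*dg : ℕ):ℝ) = (dg:ℝ)^2 := by push_cast; ring
    rw [this] at h1
    linarith

end M5c

section M5d

lemma per_n_bound (ε : ℝ) (hε : 0 < ε) (hε1 : ε ≤ 1) (K : ℕ)
    (hK64 : 64 ≤ K) (hKs : 8/ε ≤ Real.sqrt K) (hKL : 28/ε ≤ Real.log K)
    (n D : ℕ) (hD1 : 1 ≤ D) (hDs : (D:ℝ) ≤ Real.sqrt n / 2)
    (hnK : 2*K + 2 ≤ n) (hS : Even (D * n)) :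
    (1 - ε) * ((D:ℝ) * n * Real.log ((n:ℝ)/D)) ≤ 2 * Real.log (NRg n D) := by
  set m := n / 2 with hm
  have hmK : K + 1 ≤ m := by omega
  have hm64 : 64 ≤ m := by omega
  have hn4m : n ≤ 2*m + 1 ∧ 2*m ≤ n := by omega
  have hm0R : (0:ℝ) < m := by exact_mod_cast (by omega : 0 < m)
  have hm1R : (1:ℝ) ≤ m := by exact_mod_cast (by omega : 1 ≤ m)
  have hcastm : (K:ℝ) ≤ (m:ℝ) := by exact_mod_cast (by omega : K ≤ m)
  have hKs' : 8/ε ≤ Real.sqrt m := le_trans hKs (Real.sqrt_le_sqrt hcastm)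
  have hlogm : 28/ε ≤ Real.log m := by
    refine le_trans hKL (Real.log_le_log ?_ hcastm)
    have : (64:ℝ) ≤ K := by exact_mod_cast hK64
    linarith
  have hsqrtn : Real.sqrt n ≤ 2 * Real.sqrt m := by
    have h1 : (n:ℝ) ≤ 4*m := by
      have : (n:ℝ) ≤ 2*m+1 := by exact_mod_cast hn4m.1
      linarith [hm1R]
    have h2 : Real.sqrt n ≤ Real.sqrt (4*m) := Real.sqrt_le_sqrt h1
    have h3 : Real.sqrt (4*m) = 2 * Real.sqrt m := by
      rw [show (4:ℝ)*m = 2^2 * m by norm_num, Real.sqrt_mul (by positivity) m,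
        Real.sqrt_sq (by norm_num : (0:ℝ) ≤ 2)]
    linarith
  have hDm : (D:ℝ) ≤ Real.sqrt m := by linarith
  have hsq8 : 8 ≤ Real.sqrt m := by
    have h1 : Real.sqrt 64 ≤ Real.sqrt m := Real.sqrt_le_sqrt (by exact_mod_cast hm64)
    have h2 : Real.sqrt 64 = 8 := by
      rw [show (64:ℝ) = 8^2 by norm_num, Real.sqrt_sq (by norm_num : (0:ℝ) ≤ 8)]
    linarith
  have hsm8 : Real.sqrt m ≤ (m:ℝ)/8 := by
    nlinarith [Real.mul_self_sqrt hm0R.le]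
  have hmd : 2*D ≤ m := by
    have h1 : ((2*D:ℕ):ℝ) ≤ (m:ℝ) := by
      push_cast
      nlinarith
    exact_mod_cast h1
  have hD1R : (1:ℝ) ≤ (D:ℝ) := by exact_mod_cast hD1
  have hcore := core_arith (ε := ε) (m := (m:ℝ)) (dr := (D:ℝ)) (nr := (n:ℝ))
    (q := (m:ℝ) - D) (L := Real.log m) (ld := Real.log D) (lnd := Real.log ((n:ℝ)/D))
    hε hε1 hD1R hDm rfl (by exact_mod_cast hn4m.2) (by exact_mod_cast hn4m.1)
    rfl rfl rfl (by exact_mod_cast hm64) hKs' hlogm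
  have hlow := even_log_bound m D hD1 hmd
  have hlog2pos : 0 ≤ Real.log 2 := Real.log_nonneg (by norm_num)
  have hD2pos : 0 ≤ (D:ℝ)^2 * Real.log 2 := by positivity
  rcases Nat.even_or_odd n with heven | hodd
  · have hn2m : n = 2*m := by
      rcases heven with ⟨r, hr⟩
      omega
    have hfin : Real.log (NRg n D) = Real.log (NRg (2*m) D) := by rw [hn2m]
    rw [hfin]
    linarith [hcore, hlow]
  · have hn2m1 : n = 2*m + 1 := by
      rcases hodd with ⟨r, hr⟩
      omega
    have hDeven : Even D := by
      rcases Nat.even_mul.mp hS with h | h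
      · exact h
      · exfalso
        rw [Nat.even_iff] at h
        omega
    obtain ⟨e, he'⟩ := hDeven
    have hde : D = 2*e := by omega
    have he : 1 ≤ e := by omega
    have hdN : D < 2*m := by
      have h1 : (D:ℝ) < 2*m := by nlinarith
      exact_mod_cast h1
    have hodd2 := odd_log_bound (2*m) D e hde he hdN
    have hfin : Real.log (NRg n D) = Real.log (NRg (2*m+1) D) := by rw [hn2m1]
    rw [hfin]
    linarith [hcore, hlow, hodd2]

end M5d

/-- **Counting regular graphs (McKay–Wormald).** If `d(n) ≥ 1` and `d(n)/√n → 0`, then,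
along the natural numbers `n` with `d(n)·n` even, the number of simple `d(n)`-regular graphs
on `n` labelled vertices satisfies `|G_{n,d}| ≥ exp(d n ln(n/d)/2·(1-o(1)))`, i.e.
`liminf 2 ln|G_{n,d(n)}| / (d(n)·n·ln(n/d(n))) ≥ 1`. -/
theorem count_regular_graphs (d : ℕ → ℕ) (hd : ∀ n, 1 ≤ d n)
    (hdn : Tendsto (fun n : ℕ => (d n : ℝ) / Real.sqrt n) atTop (nhds 0)) :
    1 ≤ liminf (fun n : ℕ =>
        2 * Real.log ((Set.ncard {G : SimpleGraph (Fin n) | IsRegOfDeg G (d n)}) : ℝ) /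
          ((d n : ℝ) * n * Real.log ((n : ℝ) / (d n : ℝ))))
      (atTop ⊓ 𝓟 {n : ℕ | Even (d n * n)}) := by
  classical
  set S : Set ℕ := {n : ℕ | Even (d n * n)} with hSdef
  set F := atTop ⊓ 𝓟 S with hFdef
  set f : ℕ → ℝ := fun n =>
    2 * Real.log ((Set.ncard {G : SimpleGraph (Fin n) | IsRegOfDeg G (d n)}) : ℝ) /
      ((d n : ℝ) * n * Real.log ((n : ℝ) / (d n : ℝ))) with hfdef
  haveI hNeBot : F.NeBot := by
    rw [hFdef, ← Filter.frequently_mem_iff_neBot, Filter.frequently_atTop]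
    intro a
    exact ⟨2*a, by omega, ⟨d (2*a) * a, by ring⟩⟩
  have hsqrtEv : ∀ᶠ n : ℕ in atTop, (d n : ℝ) ≤ Real.sqrt n / 2 := by
    filter_upwards [hdn.eventually (Iio_mem_nhds (show (0:ℝ) < 1/2 by norm_num)),
      eventually_ge_atTop 1] with n h hn1
    have hs0 : (0:ℝ) < Real.sqrt n := Real.sqrt_pos.mpr (by exact_mod_cast hn1)
    rw [div_lt_iff₀ hs0] at h
    linarith
  have hBpos : ∀ᶠ n : ℕ in atTop, (0 < (d n : ℝ) * n * Real.log ((n:ℝ)/(d n)) ∧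
      Real.log ((n:ℝ)) ≤ 2 * Real.log ((n:ℝ)/(d n))) := by
    filter_upwards [hsqrtEv, eventually_ge_atTop 16] with n hds hn16
    have hn0 : (0:ℝ) < n := by exact_mod_cast (by omega : 0 < n)
    have hn1 : (1:ℝ) ≤ n := by exact_mod_cast (by omega : 1 ≤ n)
    have hD0 : (0:ℝ) < d n := by exact_mod_cast hd n
    have hsn : Real.sqrt n ≤ (n:ℝ) := Real.sqrt_le_iff.mpr ⟨by linarith, by nlinarith⟩
    have hDn : (d n : ℝ) < n := by linarith
    have hquot : 1 < (n:ℝ)/(d n) := (one_lt_div hD0).mpr hDn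
    have hlogpos : 0 < Real.log ((n:ℝ)/(d n)) := Real.log_pos hquot
    refine ⟨mul_pos (mul_pos hD0 hn0) hlogpos, ?_⟩
    have hlogd : Real.log (d n) ≤ Real.log (Real.sqrt n) := Real.log_le_log hD0 (by linarith)
    rw [Real.log_sqrt hn0.le] at hlogd
    have hdiv : Real.log ((n:ℝ)/(d n)) = Real.log n - Real.log (d n) :=
      Real.log_div hn0.ne' hD0.ne'
    linarith
  have hub : ∀ᶠ n in F, f n ≤ 4 := by
    apply Filter.Eventually.filter_mono inf_le_left
    filter_upwards [hBpos] with n hB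
    obtain ⟨hBp, hlogs⟩ := hB
    rw [hfdef]
    dsimp only
    rw [div_le_iff₀ hBp]
    have hup : Set.ncard {G : SimpleGraph (Fin n) | IsRegOfDeg G (d n)} ≤ n^(d n * n) :=
      nreg_upper n (d n)
    have h1 : Real.log ((Set.ncard {G : SimpleGraph (Fin n) | IsRegOfDeg G (d n)} : ℕ))
        ≤ Real.log ((n^(d n * n) : ℕ)) := nat_log_mono hup
    have h2 : Real.log (((n^(d n * n) : ℕ)) : ℝ) = ((d n : ℝ) * n) * Real.log n := by
      push_cast
      rw [Real.log_pow]
      push_cast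
      ring
    have h3 : (0:ℝ) ≤ (d n : ℝ) * n := by positivity
    have h4 : ((d n:ℝ) * n) * Real.log n ≤ ((d n:ℝ)*n) * (2*Real.log ((n:ℝ)/(d n))) :=
      mul_le_mul_of_nonneg_left hlogs h3
    rw [h2] at h1
    linarith
  have key : ∀ ε : ℝ, 0 < ε → ε ≤ 1 → ∀ᶠ n in F, 1 - ε ≤ f n := by
    intro ε hε hε1
    set K := max 64 (max ⌈(8/ε)^2⌉₊ ⌈Real.exp (28/ε)⌉₊) with hK
    have hK64 : 64 ≤ K := le_max_left _ _
    have hKs : 8/ε ≤ Real.sqrt K := by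
      have h0 : ((8/ε)^2 : ℝ) ≤ (K:ℝ) := by
        refine le_trans (Nat.le_ceil _) ?_
        exact_mod_cast le_trans (le_max_left _ _) (le_max_right 64 _)
      have h1 := Real.sqrt_le_sqrt h0
      rwa [Real.sqrt_sq (by positivity)] at h1
    have hKL : 28/ε ≤ Real.log K := by
      have h0 : Real.exp (28/ε) ≤ (K:ℝ) := by
        refine le_trans (Nat.le_ceil _) ?_
        exact_mod_cast le_trans (le_max_right _ _) (le_max_right 64 _)
      have h1 := Real.log_le_log (Real.exp_pos _) h0
      rwa [Real.log_exp] at h1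
    rw [hFdef, eventually_inf_principal]
    filter_upwards [hsqrtEv, hBpos, eventually_ge_atTop (2*K+2)] with n hds hB hnK hnS
    rw [hfdef]
    dsimp only
    rw [le_div_iff₀ hB.1]
    exact per_n_bound ε hε hε1 K hK64 hKs hKL n (d n) (hd n) hds hnK hnS
  by_contra hcon
  push_neg at hcon
  set Lv := liminf f F with hLv
  have hε0 : 0 < (1 - Lv)/2 := by linarith
  set ε' := min ((1 - Lv)/2) 1 with hε'
  have h1 : 1 - ε' ≤ Lv := by
    rw [hLv]
    exact le_liminf_of_le (isCoboundedUnder_ge_of_eventually_le F hub)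
      (key ε' (lt_min hε0 one_pos) (min_le_right _ _))
  have hε'le : ε' ≤ (1 - Lv)/2 := min_le_left _ _
  linarith
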